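/- Let F be a field and let A ∈ F(X)^{k×k} be an invertible k×k matrix of rational functions in one variable X, where every entry a_{ij} can be written as a quotient of two polynomials each of degree at most d. Then every entry of A^{−1} can be written as a quotient of two polynomials each of degree at most d·k²; moreover all entries of A^{−1} can be written with one common denominator polynomial of degree at most d·k². -/

import Mathlib

open Polynomial Finset

private lemma sum_const_deg {k : Type*} (s : Finset k) (c : ℕ) :
    ∑ _x ∈ s, ((c : ℕ) : WithBot ℕ) = ((s.card * c : ℕ) : WithBot ℕ) := by
  rw [Finset.sum_const, nsmul_eq_mul]
  push_cast
  rfl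

private lemma det_num {F : Type*} [Field F] {k d : ℕ} (p q : Fin k → Fin k → F[X])
    (hq0 : ∀ a b, q a b ≠ 0)
    (hp : ∀ a b, (p a b).degree ≤ (d : ℕ)) (hqd : ∀ a b, (q a b).degree ≤ (d : ℕ)) :
    ∃ N : F[X], N.degree ≤ (d * k ^ 2 : ℕ) ∧
      algebraMap F[X] (RatFunc F) N =
        (Matrix.of fun a b => algebraMap F[X] (RatFunc F) (p a b) /
          algebraMap F[X] (RatFunc F) (q a b)).det *
        algebraMap F[X] (RatFunc F) (∏ a, ∏ b, q a b) := by
  classical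
  set φ := algebraMap F[X] (RatFunc F) with hφ
  have hφq : ∀ a b, φ (q a b) ≠ 0 := fun a b => by
    simpa [hφ] using RatFunc.algebraMap_ne_zero (hq0 a b)
  refine ⟨∑ σ : Equiv.Perm (Fin k), Equiv.Perm.sign σ •
      ∏ i, (p (σ i) i * ∏ j ∈ univ.erase i, q (σ i) j), ?_, ?_⟩
  · refine (degree_sum_le _ _).trans ?_
    rw [Finset.sup_le_iff]
    intro σ _
    have hterm : ∀ i : Fin k,
        (p (σ i) i * ∏ j ∈ univ.erase i, q (σ i) j).degree ≤ ((d * k : ℕ) : WithBot ℕ) := by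
      intro i
      refine (degree_mul_le _ _).trans ?_
      have h2 : (∏ j ∈ univ.erase i, q (σ i) j).degree ≤ ((d * (k - 1) : ℕ) : WithBot ℕ) := by
        refine (degree_prod_le _ _).trans ?_
        refine le_trans (Finset.sum_le_sum fun j _ => hqd (σ i) j) ?_
        rw [sum_const_deg]
        have : (univ.erase i).card = k - 1 := by simp [Finset.card_erase_of_mem]
        rw [this]
        exact_mod_cast le_of_eq (by ring)
      refine le_trans (add_le_add (hp (σ i) i) h2) ?_
      rw [← Nat.cast_add]
      refine (Nat.cast_le (α := WithBot ℕ)).2 ?_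
      rcases k with _ | k'
      · exact i.elim0
      · simp [Nat.succ_sub_one, Nat.mul_succ]
        ring_nf
        omega
    have : (∏ i, (p (σ i) i * ∏ j ∈ univ.erase i, q (σ i) j)).degree
        ≤ ((d * k ^ 2 : ℕ) : WithBot ℕ) := by
      refine (degree_prod_le _ _).trans ?_
      refine le_trans (Finset.sum_le_sum fun i _ => hterm i) ?_
      rw [sum_const_deg]
      refine (Nat.cast_le (α := WithBot ℕ)).2 ?_
      simp [pow_two]; ring_nf; omega
    rcases Int.units_eq_one_or (Equiv.Perm.sign σ) with h | h <;>
      rw [h] <;> simpa using this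
  · rw [Matrix.det_apply, Finset.sum_mul, map_sum]
    refine Finset.sum_congr rfl fun σ _ => ?_
    have core : φ (∏ i, (p (σ i) i * ∏ j ∈ univ.erase i, q (σ i) j)) =
        (∏ i, (Matrix.of fun a b => φ (p a b) / φ (q a b)) (σ i) i) *
          φ (∏ a, ∏ b, q a b) := by
      rw [map_prod, map_prod]
      have : (∏ a, φ (∏ b, q a b)) = ∏ i, φ (∏ b, q (σ i) b) :=
        (Equiv.prod_comp σ (fun a => φ (∏ b, q a b))).symm
      rw [this, ← Finset.prod_mul_distrib]
      refine Finset.prod_congr rfl fun i _ => ?_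
      rw [map_mul, map_prod, map_prod]
      rw [Matrix.of_apply]
      rw [← Finset.mul_prod_erase univ (fun b => φ (q (σ i) b)) (Finset.mem_univ i)]
      have hne := hφq (σ i) i
      field_simp
    rcases Int.units_eq_one_or (Equiv.Perm.sign σ) with h | h <;> rw [h]
    · simpa using core
    · simp only [Units.neg_smul, one_smul, map_neg, neg_mul]
      rw [core]

/-- Observation (Gaussian elimination degrees), part a): if `A` is an invertible `k × k`
matrix of rational functions each of which is a quotient of two polynomials of degree
at most `d`, then every entry of `A⁻¹` is a quotient of two polynomials of degree at most
`d·k²`; moreover all entries of `A⁻¹` admit one common denominator of degree at most `d·k²`. -/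
theorem stmt2 {F : Type*} [Field F] (k d : ℕ) (A : Matrix (Fin k) (Fin k) (RatFunc F))
    (hinv : IsUnit A.det)
    (hA : ∀ i j : Fin k, ∃ p q : Polynomial F, q ≠ 0 ∧
      p.degree ≤ (d : ℕ) ∧ q.degree ≤ (d : ℕ) ∧
      A i j = algebraMap (Polynomial F) (RatFunc F) p / algebraMap (Polynomial F) (RatFunc F) q) :
    ∃ (P : Matrix (Fin k) (Fin k) (Polynomial F)) (Q : Polynomial F), Q ≠ 0 ∧
      Q.degree ≤ (d * k ^ 2 : ℕ) ∧ (∀ i j : Fin k, (P i j).degree ≤ (d * k ^ 2 : ℕ)) ∧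
      ∀ i j : Fin k, A⁻¹ i j =
        algebraMap (Polynomial F) (RatFunc F) (P i j) / algebraMap (Polynomial F) (RatFunc F) Q := by
  classical
  set φ := algebraMap (Polynomial F) (RatFunc F) with hφ
  choose p q hq0 hpd hqd hAeq using hA
  have hAof : A = Matrix.of fun a b => φ (p a b) / φ (q a b) := by
    ext a b; exact hAeq a b
  obtain ⟨N, hNdeg, hNeq⟩ := det_num p q hq0 hpd hqd
  rw [← hAof] at hNeq
  have hq : φ (∏ a, ∏ b, q a b) ≠ 0 := by
    refine RatFunc.algebraMap_ne_zero ?_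
    exact Finset.prod_ne_zero_iff.2 fun a _ => Finset.prod_ne_zero_iff.2 fun b _ => hq0 a b
  have hdet0 : A.det ≠ 0 := hinv.ne_zero
  have hN0 : N ≠ 0 := by
    intro h
    rw [h, map_zero] at hNeq
    exact (mul_ne_zero hdet0 hq) hNeq.symm
  have key : ∀ i j : Fin k, ∃ N' : F[X], N'.degree ≤ (d * k ^ 2 : ℕ) ∧
      φ N' = A.adjugate i j * φ (∏ a, ∏ b, q a b) := by
    intro i j
    set p' : Fin k → Fin k → F[X] :=
      fun a b => if a = j then (if b = i then q a b else 0) else p a b with hp'def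
    have hp' : ∀ a b, (p' a b).degree ≤ (d : ℕ) := by
      intro a b
      simp only [hp'def]
      split_ifs
      · exact hqd a b
      · simp
      · exact hpd a b
    obtain ⟨N', h1, h2⟩ := det_num p' q hq0 hp' hqd
    refine ⟨N', h1, ?_⟩
    rw [h2, Matrix.adjugate_apply]
    congr 2
    ext a b
    rw [Matrix.updateRow_apply, Matrix.of_apply]
    by_cases ha : a = j
    · subst ha
      simp only [if_pos rfl, hp'def, Pi.single_apply]
      by_cases hb : b = i
      · simp [hb, div_self (RatFunc.algebraMap_ne_zero (hq0 a i) : φ (q a i) ≠ 0)]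
      · simp [hb]
    · simp only [hp'def, if_neg ha]
      exact (hAeq a b).symm
  choose P hPdeg hPe using key
  refine ⟨Matrix.of P, N, hN0, hNdeg, fun i j => hPdeg i j, fun i j => ?_⟩
  have hinvapp : A⁻¹ i j = A.det⁻¹ * A.adjugate i j := by
    rw [Matrix.inv_def]
    simp [Ring.inverse_eq_inv']
  rw [hinvapp, Matrix.of_apply]
  rw [eq_div_iff (RatFunc.algebraMap_ne_zero hN0 : φ N ≠ 0)]
  rw [hPe i j, hNeq]
  field_simp
  ring
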